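/- Assume d ≥ 1, L ≥ 1, γ > 0, λ > 0. The point (0, 0) is a critical point of R (its gradient vanishes there), R is twice differentiable at (0, 0), and the Hessian matrix of R at (0, 0) has strictly negative determinant; consequently it has one strictly positive and one strictly negative eigenvalue, so (0, 0) is a saddle point of R. -/

import Mathlib

open MeasureTheory ProbabilityTheory Real Filter

noncomputable def erf (u : ℝ) : ℝ := 2 / Real.sqrt Real.pi * ∫ r in (0:ℝ)..u, Real.exp (-r ^ 2)

noncomputable def zeta (t s : ℝ) : ℝ := ∫ g, erf (t + g) ^ 2 ∂(gaussianReal 0 s.toNNReal)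

/-- The reduced risk `R(κ, ν)` on the invariant manifold. -/
noncomputable def Rred (d L : ℕ) (γ lam ε : ℝ) (κ ν : ℝ) : ℝ :=
  γ ^ 2 - 2 * γ ^ 2 * ν * erf (lam * Real.sqrt ((d : ℝ) / 2) * κ /
      Real.sqrt (1 + 2 * lam ^ 2 * γ ^ 2))
    + γ ^ 2 * zeta (lam * Real.sqrt ((d : ℝ) / 2) * κ) (lam ^ 2 * γ ^ 2)
    + ((L : ℝ) - 1) * zeta 0 (lam ^ 2) + ε ^ 2

/-- Partial derivative `∂κR` of the reduced risk with respect to its first argument. -/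
noncomputable def dkR (d L : ℕ) (γ lam ε : ℝ) (κ ν : ℝ) : ℝ :=
  deriv (fun x => Rred d L γ lam ε x ν) κ

/-- Partial derivative `∂νR` of the reduced risk with respect to its second argument. -/
noncomputable def dvR (d L : ℕ) (γ lam ε : ℝ) (κ ν : ℝ) : ℝ :=
  deriv (fun y => Rred d L γ lam ε κ y) ν

/-- The PGD map `g_α`. -/
noncomputable def pgd (d L : ℕ) (γ lam ε α : ℝ) (p : ℝ × ℝ) : ℝ × ℝ :=
  ((p.1 - α * dkR d L γ lam ε p.1 p.2 * (1 - p.1 ^ 2)) /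
      Real.sqrt (1 + α ^ 2 * (dkR d L γ lam ε p.1 p.2) ^ 2 * (1 - p.1 ^ 2)),
   (p.2 - α * dvR d L γ lam ε p.1 p.2 * (1 - p.2 ^ 2)) /
      Real.sqrt (1 + α ^ 2 * (dvR d L γ lam ε p.1 p.2) ^ 2 * (1 - p.2 ^ 2)))

/-- The square `[−1, 1]²`. -/
def sqIcc : Set (ℝ × ℝ) := {p | p.1 ∈ Set.Icc (-1 : ℝ) 1 ∧ p.2 ∈ Set.Icc (-1 : ℝ) 1}


open Topology

noncomputable def erf' (x : ℝ) : ℝ := 2 / Real.sqrt Real.pi * Real.exp (-x ^ 2)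

lemma cont_g : Continuous fun r : ℝ => Real.exp (-r ^ 2) :=
  Real.continuous_exp.comp (continuous_pow 2).neg

lemma hasDerivAt_erf (x : ℝ) : HasDerivAt erf (erf' x) x := by
  have h := intervalIntegral.integral_hasDerivAt_right
    (cont_g.intervalIntegrable 0 x)
    (cont_g.stronglyMeasurable.stronglyMeasurableAtFilter)
    cont_g.continuousAt
  exact (h.const_mul (2 / Real.sqrt Real.pi))

lemma continuous_erf : Continuous erf := by
  have : Differentiable ℝ erf := fun x => (hasDerivAt_erf x).differentiableAt
  exact this.continuous

lemma erf_zero : erf 0 = 0 := by simp [erf]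

lemma erf_neg (x : ℝ) : erf (-x) = - erf x := by
  unfold erf
  rw [← mul_neg]
  congr 1
  have h := intervalIntegral.integral_comp_neg (a := (0:ℝ)) (b := x) (fun r => Real.exp (-r ^ 2))
  simp only [neg_sq, neg_zero] at h
  rw [intervalIntegral.integral_symm, ← h]

lemma sqrt_pi_pos : 0 < Real.sqrt Real.pi := Real.sqrt_pos.2 Real.pi_pos

lemma erf_nonneg_of_nonneg {x : ℝ} (hx : 0 ≤ x) : 0 ≤ erf x := by
  apply mul_nonneg (by positivity)
  apply intervalIntegral.integral_nonneg hx
  intro r _; positivity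

lemma erf_pos_of_pos {x : ℝ} (hx : 0 < x) : 0 < erf x := by
  apply mul_pos (by positivity)
  apply intervalIntegral.intervalIntegral_pos_of_pos_on (cont_g.intervalIntegrable 0 x)
    (fun r _ => by positivity) hx

lemma erf_le_one_of_nonneg {x : ℝ} (hx : 0 ≤ x) : erf x ≤ 1 := by
  have hint : IntegrableOn (fun r : ℝ => Real.exp (-r ^ 2)) (Set.Ioi 0) := by
    have := integrableOn_Ioi_exp_neg_mul_sq_iff.2 (zero_lt_one (α := ℝ))
    simpa using this
  have h1 : (∫ r in (0:ℝ)..x, Real.exp (-r ^ 2)) ≤ ∫ r in Set.Ioi (0:ℝ), Real.exp (-r ^ 2) := by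
    rw [intervalIntegral.integral_of_le hx]
    apply setIntegral_mono_set hint
    · filter_upwards with r using by positivity
    · filter_upwards with r hr using hr.1
  have h2 : (∫ r in Set.Ioi (0:ℝ), Real.exp (-r ^ 2)) = Real.sqrt Real.pi / 2 := by
    have := integral_gaussian_Ioi 1
    simpa using this
  calc erf x ≤ 2 / Real.sqrt Real.pi * (Real.sqrt Real.pi / 2) := by
        exact mul_le_mul_of_nonneg_left (h2 ▸ h1) (by positivity)
    _ = 1 := by field_simp
  
lemma abs_erf_le_one (x : ℝ) : |erf x| ≤ 1 := by
  rcases le_or_gt 0 x with hx | hx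
  · rw [abs_of_nonneg (erf_nonneg_of_nonneg hx)]; exact erf_le_one_of_nonneg hx
  · have : erf x = - erf (-x) := by rw [erf_neg, neg_neg]
    rw [this, abs_neg, abs_of_nonneg (erf_nonneg_of_nonneg (by linarith))]
    exact erf_le_one_of_nonneg (by linarith)

noncomputable def erf'' (x : ℝ) : ℝ := 2 / Real.sqrt Real.pi * (Real.exp (-x ^ 2) * (-(2 * x)))

lemma hasDerivAt_erf' (x : ℝ) : HasDerivAt erf' (erf'' x) x := by
  have h1 : HasDerivAt (fun x : ℝ => -x ^ 2) (-(2 * x)) x := by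
    simpa using ((hasDerivAt_pow 2 x).fun_neg)
  have h2 := (Real.hasDerivAt_exp (-x ^ 2)).comp x h1
  exact h2.const_mul (2 / Real.sqrt Real.pi)

lemma sqrt_pi_ge_one : 1 ≤ Real.sqrt Real.pi := by
  rw [show (1:ℝ) = Real.sqrt 1 by simp]
  exact Real.sqrt_le_sqrt (by linarith [Real.pi_gt_three])

lemma two_div_sqrt_pi_le_two : 2 / Real.sqrt Real.pi ≤ 2 := by
  rw [div_le_iff₀ sqrt_pi_pos]
  nlinarith [sqrt_pi_ge_one]

lemma abs_erf'_le (x : ℝ) : |erf' x| ≤ 2 := by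
  have h1 : Real.exp (-x ^ 2) ≤ 1 := Real.exp_le_one_iff.2 (neg_nonpos.2 (sq_nonneg x))
  have h2 : 0 < Real.exp (-x ^ 2) := Real.exp_pos _
  rw [erf', abs_of_nonneg (by positivity)]
  calc 2 / Real.sqrt Real.pi * Real.exp (-x ^ 2) ≤ 2 / Real.sqrt Real.pi * 1 := by
        apply mul_le_mul_of_nonneg_left h1 (by positivity)
    _ ≤ 2 := by simpa using two_div_sqrt_pi_le_two

lemma abs_x_exp_le (x : ℝ) : |x| * Real.exp (-x ^ 2) ≤ 1 / 2 := by
  have h1 : 1 + x ^ 2 ≤ Real.exp (x ^ 2) := by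
    linarith [Real.add_one_le_exp (x ^ 2)]
  have h2 : 2 * |x| ≤ 1 + x ^ 2 := by nlinarith [sq_abs x, sq_nonneg (|x| - 1)]
  have h3 : Real.exp (-x ^ 2) = (Real.exp (x ^ 2))⁻¹ := by
    rw [← Real.exp_neg]
  rw [h3]
  rw [mul_inv_le_iff₀ (Real.exp_pos _)]
  nlinarith [Real.exp_pos (x ^ 2)]

lemma abs_erf''_le (x : ℝ) : |erf'' x| ≤ 2 := by
  have heq : |erf'' x| = 2 / Real.sqrt Real.pi * (Real.exp (-x ^ 2) * (2 * |x|)) := by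
    rw [erf'', abs_mul, abs_mul, abs_neg, abs_mul,
      abs_of_nonneg (by positivity : (0:ℝ) ≤ 2 / Real.sqrt Real.pi),
      abs_of_nonneg (Real.exp_pos _).le, abs_of_nonneg (by norm_num : (0:ℝ) ≤ 2)]
  rw [heq]
  have h4 := abs_x_exp_le x
  have h5 : Real.exp (-x ^ 2) * (2 * |x|) ≤ 1 := by nlinarith [abs_nonneg x, (Real.exp_pos (-x ^ 2)).le]
  calc 2 / Real.sqrt Real.pi * (Real.exp (-x ^ 2) * (2 * |x|)) ≤ 2 / Real.sqrt Real.pi * 1 :=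
        mul_le_mul_of_nonneg_left h5 (by positivity)
    _ ≤ 2 := by simpa using two_div_sqrt_pi_le_two

lemma continuous_erf' : Continuous erf' := by
  have : Differentiable ℝ erf' := fun x => (hasDerivAt_erf' x).differentiableAt
  exact this.continuous

lemma continuous_erf'' : Continuous erf'' := by
  unfold erf''
  fun_prop

lemma contDiff_two_erf : ContDiff ℝ 2 erf := by
  rw [show (2 : WithTop ℕ∞) = 1 + 1 by norm_num, contDiff_succ_iff_deriv]
  refine ⟨fun x => (hasDerivAt_erf x).differentiableAt, by simp, ?_⟩
  have hd : deriv erf = erf' := funext fun x => (hasDerivAt_erf x).deriv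
  rw [hd, contDiff_one_iff_deriv]
  refine ⟨fun x => (hasDerivAt_erf' x).differentiableAt, ?_⟩
  have hd2 : deriv erf' = erf'' := funext fun x => (hasDerivAt_erf' x).deriv
  rw [hd2]; exact continuous_erf''

section param
variable {μ : Measure ℝ} [IsProbabilityMeasure μ]

lemma continuous_add_comp {f : ℝ → ℝ} (hf : Continuous f) (t : ℝ) :
    Continuous fun g : ℝ => f (t + g) := hf.comp (continuous_const.add continuous_id)

lemma hasDerivAt_E0 (g t : ℝ) :
    HasDerivAt (fun t => erf (t + g) ^ 2) (2 * erf (t + g) * erf' (t + g)) t := by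
  have h1 : HasDerivAt (fun t : ℝ => t + g) 1 t := (hasDerivAt_id t).add_const g
  have h2 : HasDerivAt (fun t => erf (t + g)) (erf' (t + g)) t := by
    simpa [Function.comp_def] using (hasDerivAt_erf (t + g)).comp t h1
  have h3 := h2.pow 2
  norm_num at h3
  exact h3

lemma hasDerivAt_E1 (g t : ℝ) :
    HasDerivAt (fun t => 2 * erf (t + g) * erf' (t + g))
      (2 * erf' (t + g) ^ 2 + 2 * erf (t + g) * erf'' (t + g)) t := by
  have h1 : HasDerivAt (fun t : ℝ => t + g) 1 t := (hasDerivAt_id t).add_const g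
  have h2 : HasDerivAt (fun t => erf (t + g)) (erf' (t + g)) t := by
    simpa [Function.comp_def] using (hasDerivAt_erf (t + g)).comp t h1
  have h3 : HasDerivAt (fun t => erf' (t + g)) (erf'' (t + g)) t := by
    simpa [Function.comp_def] using (hasDerivAt_erf' (t + g)).comp t h1
  have h4 := (h2.const_mul 2).fun_mul h3
  exact h4.congr_deriv (by ring)

lemma abs_E1_le (u : ℝ) : |2 * erf u * erf' u| ≤ 4 := by
  have h1 := abs_erf_le_one u
  have h2 := abs_erf'_le u
  rw [abs_mul, abs_mul]
  have : |(2:ℝ)| = 2 := by norm_num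
  rw [this]
  nlinarith [abs_nonneg (erf u), abs_nonneg (erf' u)]

lemma abs_E2_le (u : ℝ) : |2 * erf' u ^ 2 + 2 * erf u * erf'' u| ≤ 12 := by
  have h1 := abs_erf_le_one u
  have h2 := abs_erf'_le u
  have h3 := abs_erf''_le u
  have ha := abs_nonneg (erf u)
  have hb := abs_nonneg (erf' u)
  have hc := abs_nonneg (erf'' u)
  calc |2 * erf' u ^ 2 + 2 * erf u * erf'' u|
      ≤ |2 * erf' u ^ 2| + |2 * erf u * erf'' u| := abs_add_le _ _
    _ ≤ 12 := by
        rw [abs_mul, abs_mul, abs_mul, abs_pow]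
        norm_num
        nlinarith [sq_abs (erf' u)]

lemma integrable_E0 (t : ℝ) : Integrable (fun g => erf (t + g) ^ 2) μ := by
  refine (integrable_const (1:ℝ)).mono'
    ((continuous_add_comp continuous_erf t).pow 2).aestronglyMeasurable ?_
  filter_upwards with g
  rw [Real.norm_eq_abs, abs_pow]
  nlinarith [abs_erf_le_one (t + g), abs_nonneg (erf (t + g))]

lemma integrable_E1 (t : ℝ) : Integrable (fun g => 2 * erf (t + g) * erf' (t + g)) μ := by
  refine (integrable_const (4:ℝ)).mono'
    ((continuous_const.mul (continuous_add_comp continuous_erf t)).mul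
      (continuous_add_comp continuous_erf' t)).aestronglyMeasurable ?_
  filter_upwards with g
  exact abs_E1_le (t + g)

lemma hasDerivAt_zeta_int (t₀ : ℝ) :
    HasDerivAt (fun t => ∫ g, erf (t + g) ^ 2 ∂μ)
      (∫ g, 2 * erf (t₀ + g) * erf' (t₀ + g) ∂μ) t₀ := by
  have h := hasDerivAt_integral_of_dominated_loc_of_deriv_le
    (F := fun t g => erf (t + g) ^ 2) (F' := fun t g => 2 * erf (t + g) * erf' (t + g))
    (bound := fun _ => (4:ℝ)) (μ := μ) (x₀ := t₀) (Metric.ball_mem_nhds t₀ one_pos)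
    (Eventually.of_forall fun t =>
      ((continuous_add_comp continuous_erf t).pow 2).aestronglyMeasurable)
    (integrable_E0 t₀)
    ((continuous_const.mul (continuous_add_comp continuous_erf t₀)).mul
      (continuous_add_comp continuous_erf' t₀)).aestronglyMeasurable
    (by filter_upwards with g t _ using abs_E1_le (t + g))
    (integrable_const 4)
    (by filter_upwards with g t _ using hasDerivAt_E0 g t)
  exact h.2

lemma hasDerivAt_zeta_int2 (t₀ : ℝ) :
    HasDerivAt (fun t => ∫ g, 2 * erf (t + g) * erf' (t + g) ∂μ)
      (∫ g, 2 * erf' (t₀ + g) ^ 2 + 2 * erf (t₀ + g) * erf'' (t₀ + g) ∂μ) t₀ := by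
  have h := hasDerivAt_integral_of_dominated_loc_of_deriv_le
    (F := fun t g => 2 * erf (t + g) * erf' (t + g))
    (F' := fun t g => 2 * erf' (t + g) ^ 2 + 2 * erf (t + g) * erf'' (t + g))
    (bound := fun _ => (12:ℝ)) (μ := μ) (x₀ := t₀) (Metric.ball_mem_nhds t₀ one_pos)
    (Eventually.of_forall fun t =>
      ((continuous_const.mul (continuous_add_comp continuous_erf t)).mul
        (continuous_add_comp continuous_erf' t)).aestronglyMeasurable)
    (integrable_E1 t₀)
    ((continuous_const.mul ((continuous_add_comp continuous_erf' t₀).pow 2)).add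
      ((continuous_const.mul (continuous_add_comp continuous_erf t₀)).mul
        (continuous_add_comp continuous_erf'' t₀))).aestronglyMeasurable
    (by filter_upwards with g t _ using abs_E2_le (t + g))
    (integrable_const 12)
    (by filter_upwards with g t _ using hasDerivAt_E1 g t)
  exact h.2

lemma continuous_zeta_int2 :
    Continuous (fun t => ∫ g, 2 * erf' (t + g) ^ 2 + 2 * erf (t + g) * erf'' (t + g) ∂μ) := by
  refine continuous_of_dominated (bound := fun _ => (12:ℝ)) ?_ ?_ (integrable_const 12) ?_
  · intro t
    exact ((continuous_const.mul ((continuous_add_comp continuous_erf' t).pow 2)).add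
      ((continuous_const.mul (continuous_add_comp continuous_erf t)).mul
        (continuous_add_comp continuous_erf'' t))).aestronglyMeasurable
  · intro t
    filter_upwards with g using abs_E2_le (t + g)
  · filter_upwards with g
    have hc : Continuous fun t : ℝ => t + g := continuous_id.add continuous_const
    exact (continuous_const.mul ((continuous_erf'.comp hc).pow 2)).add
      ((continuous_const.mul (continuous_erf.comp hc)).mul (continuous_erf''.comp hc))

lemma contDiff_zeta_int : ContDiff ℝ 2 (fun t => ∫ g, erf (t + g) ^ 2 ∂μ) := by
  rw [show (2 : WithTop ℕ∞) = 1 + 1 by norm_num, contDiff_succ_iff_deriv]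
  refine ⟨fun t => (hasDerivAt_zeta_int t).differentiableAt, by simp, ?_⟩
  have hd : deriv (fun t => ∫ g, erf (t + g) ^ 2 ∂μ)
      = fun t => ∫ g, 2 * erf (t + g) * erf' (t + g) ∂μ :=
    funext fun t => (hasDerivAt_zeta_int t).deriv
  rw [hd, contDiff_one_iff_deriv]
  refine ⟨fun t => (hasDerivAt_zeta_int2 t).differentiableAt, ?_⟩
  have hd2 : deriv (fun t => ∫ g, 2 * erf (t + g) * erf' (t + g) ∂μ)
      = fun t => ∫ g, 2 * erf' (t + g) ^ 2 + 2 * erf (t + g) * erf'' (t + g) ∂μ :=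
    funext fun t => (hasDerivAt_zeta_int2 t).deriv
  rw [hd2]
  exact continuous_zeta_int2

end param

lemma contDiff_zeta (s : ℝ) : ContDiff ℝ 2 (fun t => zeta t s) := by
  unfold zeta
  exact contDiff_zeta_int

lemma gaussianReal_symm (v : NNReal) :
    (gaussianReal 0 v).map (fun x : ℝ => -x) = gaussianReal 0 v := by
  have h := gaussianReal_map_const_mul (μ := 0) (v := v) (-1)
  have h2 : (fun x : ℝ => -1 * x) = fun x : ℝ => -x := by funext x; ring
  rw [h2] at h
  rw [h]
  congr 1
  · ring
  · ext
    push_cast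
    norm_num

lemma zeta_even (s t : ℝ) : zeta (-t) s = zeta t s := by
  unfold zeta
  set ν := gaussianReal 0 s.toNNReal
  have hmap : ν.map (fun x : ℝ => -x) = ν := gaussianReal_symm _
  calc (∫ g, erf (-t + g) ^ 2 ∂ν) = ∫ g, erf (-t + g) ^ 2 ∂(ν.map (fun x : ℝ => -x)) := by
        rw [hmap]
    _ = ∫ g, erf (-t + -g) ^ 2 ∂ν := by
        rw [integral_map measurable_neg.aemeasurable
          ((continuous_add_comp continuous_erf (-t)).fun_pow 2).aestronglyMeasurable]
    _ = ∫ g, erf (t + g) ^ 2 ∂ν := by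
        congr 1
        funext g
        rw [show -t + -g = -(t + g) by ring, erf_neg]
        ring

lemma hasDerivAt_zero_of_even {f : ℝ → ℝ} (hf : ∀ x, f (-x) = f x) {m : ℝ}
    (h : HasDerivAt f m 0) : m = 0 := by
  have h1 : HasDerivAt (fun x => f (-x)) (-m) 0 := by
    have hneg : HasDerivAt (fun x : ℝ => -x) (-1) 0 := (hasDerivAt_id 0).neg
    have h0 : HasDerivAt f m (-0 : ℝ) := by simpa using h
    have := h0.comp 0 hneg
    simpa [Function.comp_def] using this
  have h2 : HasDerivAt f (-m) 0 := by
    have : (fun x => f (-x)) = f := funext hf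
    rwa [this] at h1
  have := h2.unique h
  linarith

lemma hasDerivAt_Rred_y (d L : ℕ) (γ lam ε κ y : ℝ) :
    HasDerivAt (fun y => Rred d L γ lam ε κ y)
      (-(2 * γ ^ 2 * erf (lam * Real.sqrt ((d : ℝ) / 2) * κ /
        Real.sqrt (1 + 2 * lam ^ 2 * γ ^ 2)))) y := by
  have hfun : (fun y => Rred d L γ lam ε κ y) = fun y =>
      (-(2 * γ ^ 2 * erf (lam * Real.sqrt ((d : ℝ) / 2) * κ /
        Real.sqrt (1 + 2 * lam ^ 2 * γ ^ 2)))) * y +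
      (γ ^ 2 + γ ^ 2 * zeta (lam * Real.sqrt ((d : ℝ) / 2) * κ) (lam ^ 2 * γ ^ 2)
        + ((L : ℝ) - 1) * zeta 0 (lam ^ 2) + ε ^ 2) := by
    funext y; unfold Rred; ring
  rw [hfun]
  simpa using ((hasDerivAt_id y).const_mul
    (-(2 * γ ^ 2 * erf (lam * Real.sqrt ((d : ℝ) / 2) * κ /
      Real.sqrt (1 + 2 * lam ^ 2 * γ ^ 2))))).add_const
      (γ ^ 2 + γ ^ 2 * zeta (lam * Real.sqrt ((d : ℝ) / 2) * κ) (lam ^ 2 * γ ^ 2)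
        + ((L : ℝ) - 1) * zeta 0 (lam ^ 2) + ε ^ 2)

lemma hasDerivAt_zeta_zero (s : ℝ) : HasDerivAt (fun t => zeta t s) 0 0 := by
  have hφd : DifferentiableAt ℝ (fun t => zeta t s) 0 :=
    ((contDiff_zeta s).differentiable two_ne_zero).differentiableAt
  have h := hφd.hasDerivAt
  have h0 : deriv (fun t => zeta t s) 0 = 0 :=
    hasDerivAt_zero_of_even (fun x => zeta_even s x) h
  rwa [h0] at h

lemma hasDerivAt_Rred_x (d L : ℕ) (γ lam ε ν : ℝ) :
    HasDerivAt (fun x => Rred d L γ lam ε x ν)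
      (-(2 * γ ^ 2 * ν * (erf' 0 * (lam * Real.sqrt ((d : ℝ) / 2) /
        Real.sqrt (1 + 2 * lam ^ 2 * γ ^ 2))))) 0 := by
  set a := lam * Real.sqrt ((d : ℝ) / 2) with ha
  set den := Real.sqrt (1 + 2 * lam ^ 2 * γ ^ 2) with hden
  have h1 : HasDerivAt (fun x : ℝ => a * x / den) (a / den) 0 := by
    simpa using ((hasDerivAt_id (0:ℝ)).const_mul a).div_const den
  have h2 : HasDerivAt (fun x : ℝ => erf (a * x / den)) (erf' 0 * (a / den)) 0 := by
    have h0 : HasDerivAt erf (erf' 0) (a * 0 / den) := by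
      simpa using hasDerivAt_erf 0
    simpa [Function.comp_def] using h0.comp 0 h1
  have h3 : HasDerivAt (fun x : ℝ => zeta (a * x) (lam ^ 2 * γ ^ 2)) 0 0 := by
    have hin : HasDerivAt (fun x : ℝ => a * x) a 0 := by
      simpa using (hasDerivAt_id (0:ℝ)).const_mul a
    have hz : HasDerivAt (fun t => zeta t (lam ^ 2 * γ ^ 2)) 0 (a * 0) := by
      simpa using hasDerivAt_zeta_zero (lam ^ 2 * γ ^ 2)
    simpa [Function.comp_def] using hz.comp 0 hin
  have hbig := (((h2.const_mul (2 * γ ^ 2 * ν)).const_sub (γ ^ 2)).fun_add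
    (h3.const_mul (γ ^ 2))).add_const (((L : ℝ) - 1) * zeta 0 (lam ^ 2)) |>.add_const (ε ^ 2)
  have : (fun x => γ ^ 2 - 2 * γ ^ 2 * ν * erf (a * x / den)
      + γ ^ 2 * zeta (a * x) (lam ^ 2 * γ ^ 2)
      + ((L : ℝ) - 1) * zeta 0 (lam ^ 2) + ε ^ 2) = fun x => Rred d L γ lam ε x ν := rfl
  rw [this] at hbig
  simpa using hbig

lemma Rred_zero_left (d L : ℕ) (γ lam ε ν : ℝ) :
    Rred d L γ lam ε 0 ν = Rred d L γ lam ε 0 0 := by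
  unfold Rred
  simp [erf_zero]

lemma slope_neg_aux (d L : ℕ) (hd : 1 ≤ d) (γ lam ε : ℝ) (hγ : 0 < γ) (hlam : 0 < lam)
    {ν₀ : ℝ} (hν₀ : 0 < ν₀) :
    ∃ m : ℝ, m < 0 ∧ HasDerivAt (fun x => Rred d L γ lam ε x ν₀) m 0 := by
  refine ⟨_, ?_, hasDerivAt_Rred_x d L γ lam ε ν₀⟩
  have hd1 : (1:ℝ) ≤ (d : ℝ) := by exact_mod_cast hd
  have hA : 0 < lam * Real.sqrt ((d : ℝ) / 2) :=
    mul_pos hlam (Real.sqrt_pos.2 (by linarith))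
  have hden : 0 < Real.sqrt (1 + 2 * lam ^ 2 * γ ^ 2) := Real.sqrt_pos.2 (by positivity)
  have herf'0 : 0 < erf' 0 := by unfold erf'; positivity
  have hpos : 0 < 2 * γ ^ 2 * ν₀ * (erf' 0 * (lam * Real.sqrt ((d : ℝ) / 2) /
      Real.sqrt (1 + 2 * lam ^ 2 * γ ^ 2))) :=
    mul_pos (mul_pos (mul_pos two_pos (pow_pos hγ 2)) hν₀)
      (mul_pos herf'0 (div_pos hA hden))
  linarith

lemma exists_pt_lt (d L : ℕ) (hd : 1 ≤ d) (γ lam ε : ℝ) (hγ : 0 < γ) (hlam : 0 < lam)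
    {δ : ℝ} (hδ : 0 < δ) :
    ∃ κ : ℝ, 0 < κ ∧ κ < δ / 2 ∧
      Rred d L γ lam ε κ (δ / 2) < Rred d L γ lam ε 0 0 := by
  obtain ⟨m, hm, hg⟩ := slope_neg_aux d L hd γ lam ε hγ hlam (half_pos hδ)
  set g := fun x => Rred d L γ lam ε x (δ / 2) with hgdef
  have htends : Tendsto (slope g 0) (𝓝[≠] 0) (𝓝 m) := hasDerivAt_iff_tendsto_slope.mp hg
  have htends' : Tendsto (slope g 0) (𝓝[>] 0) (𝓝 m) :=
    htends.mono_left (nhdsWithin_mono 0 (fun x hx => Set.mem_compl_singleton_iff.mpr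
      (ne_of_gt hx)))
  have ev1 : ∀ᶠ κ in 𝓝[>] (0:ℝ), slope g 0 κ < 0 := htends'.eventually_lt_const hm
  have ev2 : ∀ᶠ κ in 𝓝[>] (0:ℝ), κ ∈ Set.Ioo (0:ℝ) (δ / 2) := by
    filter_upwards [Ioo_mem_nhdsGT_of_mem ⟨le_refl (0:ℝ), half_pos hδ⟩] with x hx using hx
  obtain ⟨κ, hs, hκm⟩ := (ev1.and ev2).exists
  have hκpos : 0 < κ := hκm.1
  rw [slope_def_field] at hs
  rw [sub_zero] at hs
  have h := mul_neg_of_neg_of_pos hs hκpos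
  rw [div_mul_cancel₀ _ (ne_of_gt hκpos)] at h
  refine ⟨κ, hκpos, hκm.2, ?_⟩
  have h0 : g 0 = Rred d L γ lam ε 0 0 := Rred_zero_left d L γ lam ε (δ / 2)
  have : g κ < g 0 := by linarith
  rwa [h0] at this

lemma exists_pt_gt (d L : ℕ) (hd : 1 ≤ d) (γ lam ε : ℝ) (hγ : 0 < γ) (hlam : 0 < lam)
    {δ : ℝ} (hδ : 0 < δ) :
    ∃ κ : ℝ, -(δ / 2) < κ ∧ κ < 0 ∧
      Rred d L γ lam ε 0 0 < Rred d L γ lam ε κ (δ / 2) := by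
  obtain ⟨m, hm, hg⟩ := slope_neg_aux d L hd γ lam ε hγ hlam (half_pos hδ)
  set g := fun x => Rred d L γ lam ε x (δ / 2) with hgdef
  have htends : Tendsto (slope g 0) (𝓝[≠] 0) (𝓝 m) := hasDerivAt_iff_tendsto_slope.mp hg
  have htends' : Tendsto (slope g 0) (𝓝[<] 0) (𝓝 m) :=
    htends.mono_left (nhdsWithin_mono 0 (fun x hx => Set.mem_compl_singleton_iff.mpr
      (ne_of_lt hx)))
  have ev1 : ∀ᶠ κ in 𝓝[<] (0:ℝ), slope g 0 κ < 0 := htends'.eventually_lt_const hm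
  have ev2 : ∀ᶠ κ in 𝓝[<] (0:ℝ), κ ∈ Set.Ioo (-(δ / 2)) (0:ℝ) := by
    have hmem : (0:ℝ) ∈ Set.Ioc (-(δ / 2)) 0 := ⟨by linarith [half_pos hδ], le_refl 0⟩
    filter_upwards [Ioo_mem_nhdsLT_of_mem hmem] with x hx using hx
  obtain ⟨κ, hs, hκm⟩ := (ev1.and ev2).exists
  have hκneg : κ < 0 := hκm.2
  rw [slope_def_field] at hs
  rw [sub_zero] at hs
  have h := mul_pos_of_neg_of_neg hs hκneg
  rw [div_mul_cancel₀ _ (ne_of_lt hκneg)] at h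
  refine ⟨κ, hκm.1, hκneg, ?_⟩
  have h0 : g 0 = Rred d L γ lam ε 0 0 := Rred_zero_left d L γ lam ε (δ / 2)
  have : g 0 < g κ := by linarith
  rwa [h0] at this


lemma contDiff_Rred2 (d L : ℕ) (γ lam ε : ℝ) :
    ContDiff ℝ 2 (fun p : ℝ × ℝ => Rred d L γ lam ε p.1 p.2) := by
  unfold Rred
  have he : ContDiff ℝ 2 (fun p : ℝ × ℝ =>
      lam * Real.sqrt ((d : ℝ) / 2) * p.1 / Real.sqrt (1 + 2 * lam ^ 2 * γ ^ 2)) :=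
    (contDiff_const.mul contDiff_fst).div_const _
  have herf : ContDiff ℝ 2 (fun p : ℝ × ℝ => erf (lam * Real.sqrt ((d : ℝ) / 2) * p.1 /
      Real.sqrt (1 + 2 * lam ^ 2 * γ ^ 2))) := contDiff_two_erf.comp he
  have hz : ContDiff ℝ 2 (fun p : ℝ × ℝ =>
      zeta (lam * Real.sqrt ((d : ℝ) / 2) * p.1) (lam ^ 2 * γ ^ 2)) :=
    (contDiff_zeta (lam ^ 2 * γ ^ 2)).comp (contDiff_const.mul contDiff_fst)
  exact (((contDiff_const.sub ((contDiff_const.mul contDiff_snd).mul herf)).add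
    (contDiff_const.mul hz)).add contDiff_const).add contDiff_const

lemma eigen_lemma (A b : ℝ) (hb : b ≠ 0) :
    ∃ (μ₁ μ₂ : ℝ) (v₁ v₂ : Fin 2 → ℝ), 0 < μ₁ ∧ μ₂ < 0 ∧ v₁ ≠ 0 ∧ v₂ ≠ 0 ∧
      (!![A, b; b, 0]).mulVec v₁ = μ₁ • v₁ ∧ (!![A, b; b, 0]).mulVec v₂ = μ₂ • v₂ := by
  set s := Real.sqrt (A ^ 2 + 4 * b ^ 2) with hsdef
  have hbb : 0 < b ^ 2 := by positivity
  have hs2 : s ^ 2 = A ^ 2 + 4 * b ^ 2 := Real.sq_sqrt (by positivity)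
  have hs0 : 0 ≤ s := Real.sqrt_nonneg _
  have hsA : |A| < s := by
    nlinarith [sq_abs A, abs_nonneg A]
  have habs := abs_lt.mp hsA
  refine ⟨(A + s) / 2, (A - s) / 2, ![(A + s) / 2, b], ![(A - s) / 2, b], ?_, ?_, ?_, ?_, ?_, ?_⟩
  · nlinarith [neg_abs_le A]
  · nlinarith [le_abs_self A]
  · intro h
    exact hb (by simpa using congrFun h 1)
  · intro h
    exact hb (by simpa using congrFun h 1)
  · funext i
    fin_cases i
    · simp [Matrix.mulVec, dotProduct, Fin.sum_univ_two]
      linear_combination (-1 / 4 : ℝ) * hs2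
    · simp [Matrix.mulVec, dotProduct, Fin.sum_univ_two]
      ring
  · funext i
    fin_cases i
    · simp [Matrix.mulVec, dotProduct, Fin.sum_univ_two]
      linear_combination (-1 / 4 : ℝ) * hs2
    · simp [Matrix.mulVec, dotProduct, Fin.sum_univ_two]
      ring


/-- `(0,0)` is a critical point of the reduced risk; `R` is twice differentiable at
`(0,0)`; the Hessian at `(0,0)` has negative determinant, hence one positive and one
negative eigenvalue; consequently `(0,0)` is a saddle point (neither a local minimum
nor a local maximum). -/
theorem stmt7 (d L : ℕ) (hd : 1 ≤ d) (hL : 1 ≤ L) (γ lam ε : ℝ)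
    (hγ : 0 < γ) (hlam : 0 < lam) (hε : 0 ≤ ε) :
    let f : ℝ × ℝ → ℝ := fun p => Rred d L γ lam ε p.1 p.2
    let hκκ : ℝ := deriv (fun x => deriv (fun x' => Rred d L γ lam ε x' 0) x) 0
    let hκν : ℝ := deriv (fun x => deriv (fun y => Rred d L γ lam ε x y) 0) 0
    let hνκ : ℝ := deriv (fun y => deriv (fun x => Rred d L γ lam ε x y) 0) 0
    let hνν : ℝ := deriv (fun y => deriv (fun y' => Rred d L γ lam ε 0 y') y) 0
    let H : Matrix (Fin 2) (Fin 2) ℝ := !![hκκ, hκν; hνκ, hνν]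
    dkR d L γ lam ε 0 0 = 0 ∧ dvR d L γ lam ε 0 0 = 0 ∧
    ContDiffAt ℝ 2 f (0, 0) ∧
    H.det < 0 ∧
    (∃ (μ₁ μ₂ : ℝ) (v₁ v₂ : Fin 2 → ℝ), 0 < μ₁ ∧ μ₂ < 0 ∧ v₁ ≠ 0 ∧ v₂ ≠ 0 ∧
      H.mulVec v₁ = μ₁ • v₁ ∧ H.mulVec v₂ = μ₂ • v₂) ∧
    ¬ IsLocalMin f (0, 0) ∧ ¬ IsLocalMax f (0, 0) := by
  intro f hκκ hκν hνκ hνν H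
  have hd1 : (1:ℝ) ≤ (d : ℝ) := by exact_mod_cast hd
  have hA : 0 < lam * Real.sqrt ((d : ℝ) / 2) :=
    mul_pos hlam (Real.sqrt_pos.2 (by linarith))
  have hden : 0 < Real.sqrt (1 + 2 * lam ^ 2 * γ ^ 2) := Real.sqrt_pos.2 (by positivity)
  have herf'0 : 0 < erf' 0 := by unfold erf'; positivity
  set b : ℝ := -(2 * γ ^ 2 * (erf' 0 * (lam * Real.sqrt ((d : ℝ) / 2) /
      Real.sqrt (1 + 2 * lam ^ 2 * γ ^ 2)))) with hb
  have hbneg : b < 0 := by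
    have hp : 0 < 2 * γ ^ 2 * (erf' 0 * (lam * Real.sqrt ((d : ℝ) / 2) /
        Real.sqrt (1 + 2 * lam ^ 2 * γ ^ 2))) :=
      mul_pos (mul_pos two_pos (pow_pos hγ 2)) (mul_pos herf'0 (div_pos hA hden))
    rw [hb]; linarith
  -- second partials
  have h1 : HasDerivAt (fun x : ℝ => lam * Real.sqrt ((d : ℝ) / 2) * x /
      Real.sqrt (1 + 2 * lam ^ 2 * γ ^ 2))
      (lam * Real.sqrt ((d : ℝ) / 2) / Real.sqrt (1 + 2 * lam ^ 2 * γ ^ 2)) 0 := by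
    simpa using ((hasDerivAt_id (0:ℝ)).const_mul (lam * Real.sqrt ((d : ℝ) / 2))).div_const
      (Real.sqrt (1 + 2 * lam ^ 2 * γ ^ 2))
  have h2 : HasDerivAt (fun x : ℝ => erf (lam * Real.sqrt ((d : ℝ) / 2) * x /
      Real.sqrt (1 + 2 * lam ^ 2 * γ ^ 2)))
      (erf' 0 * (lam * Real.sqrt ((d : ℝ) / 2) / Real.sqrt (1 + 2 * lam ^ 2 * γ ^ 2))) 0 := by
    have h0 : HasDerivAt erf (erf' 0) (lam * Real.sqrt ((d : ℝ) / 2) * 0 /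
        Real.sqrt (1 + 2 * lam ^ 2 * γ ^ 2)) := by
      simpa using hasDerivAt_erf 0
    simpa [Function.comp_def] using h0.comp 0 h1
  have hκν_val : hκν = b := by
    show deriv (fun x => deriv (fun y => Rred d L γ lam ε x y) 0) 0 = b
    have hfun : (fun x => deriv (fun y => Rred d L γ lam ε x y) 0)
        = fun x => -(2 * γ ^ 2 * erf (lam * Real.sqrt ((d : ℝ) / 2) * x /
          Real.sqrt (1 + 2 * lam ^ 2 * γ ^ 2))) :=
      funext fun x => (hasDerivAt_Rred_y d L γ lam ε x 0).deriv
    rw [hfun]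
    have h3 := (h2.const_mul (2 * γ ^ 2)).fun_neg
    rw [h3.deriv, hb]
  have hνκ_val : hνκ = b := by
    show deriv (fun y => deriv (fun x => Rred d L γ lam ε x y) 0) 0 = b
    have hfun : (fun y => deriv (fun x => Rred d L γ lam ε x y) 0)
        = fun y => -(2 * γ ^ 2 * (erf' 0 * (lam * Real.sqrt ((d : ℝ) / 2) /
          Real.sqrt (1 + 2 * lam ^ 2 * γ ^ 2)))) * y := by
      funext y
      rw [(hasDerivAt_Rred_x d L γ lam ε y).deriv]
      ring
    rw [hfun]
    have h4 : HasDerivAt (fun y : ℝ => -(2 * γ ^ 2 * (erf' 0 * (lam * Real.sqrt ((d : ℝ) / 2) /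
        Real.sqrt (1 + 2 * lam ^ 2 * γ ^ 2)))) * y)
        (-(2 * γ ^ 2 * (erf' 0 * (lam * Real.sqrt ((d : ℝ) / 2) /
        Real.sqrt (1 + 2 * lam ^ 2 * γ ^ 2)))) * 1) 0 :=
      (hasDerivAt_id (0:ℝ)).const_mul _
    rw [h4.deriv, mul_one, hb]
  have hνν_val : hνν = 0 := by
    show deriv (fun y => deriv (fun y' => Rred d L γ lam ε 0 y') y) 0 = 0
    have hfun : (fun y => deriv (fun y' => Rred d L γ lam ε 0 y') y)
        = fun _ : ℝ => -(2 * γ ^ 2 * erf (lam * Real.sqrt ((d : ℝ) / 2) * 0 /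
          Real.sqrt (1 + 2 * lam ^ 2 * γ ^ 2))) :=
      funext fun y => (hasDerivAt_Rred_y d L γ lam ε 0 y).deriv
    rw [hfun, deriv_const]
  have hH : H = !![hκκ, b; b, 0] := by
    show !![hκκ, hκν; hνκ, hνν] = !![hκκ, b; b, 0]
    rw [hκν_val, hνκ_val, hνν_val]
  refine ⟨?_, ?_, ?_, ?_, ?_, ?_, ?_⟩
  · unfold dkR
    rw [(hasDerivAt_Rred_x d L γ lam ε 0).deriv]
    ring
  · unfold dvR
    rw [(hasDerivAt_Rred_y d L γ lam ε 0 0).deriv]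
    simp [erf_zero]
  · exact (contDiff_Rred2 d L γ lam ε).contDiffAt
  · rw [hH, Matrix.det_fin_two_of]
    nlinarith [mul_pos_of_neg_of_neg hbneg hbneg]
  · rw [hH]
    exact eigen_lemma hκκ b (ne_of_lt hbneg)
  · intro hmin
    obtain ⟨δ, hδ, hball⟩ := Metric.eventually_nhds_iff.mp hmin
    obtain ⟨κ, hκ0, hκδ, hlt⟩ := exists_pt_lt d L hd γ lam ε hγ hlam hδ
    have hdist : dist ((κ, δ / 2) : ℝ × ℝ) ((0, 0) : ℝ × ℝ) < δ := by
      rw [Prod.dist_eq]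
      simp only [Real.dist_eq, sub_zero]
      rw [abs_of_pos hκ0, abs_of_pos (half_pos hδ)]
      exact max_lt (by linarith) (by linarith)
    have := hball hdist
    exact absurd this (not_le.2 hlt)
  · intro hmax
    obtain ⟨δ, hδ, hball⟩ := Metric.eventually_nhds_iff.mp hmax
    obtain ⟨κ, hκl, hκ0, hgt⟩ := exists_pt_gt d L hd γ lam ε hγ hlam hδ
    have hdist : dist ((κ, δ / 2) : ℝ × ℝ) ((0, 0) : ℝ × ℝ) < δ := by
      rw [Prod.dist_eq]
      simp only [Real.dist_eq, sub_zero]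
      rw [abs_of_neg hκ0, abs_of_pos (half_pos hδ)]
      exact max_lt (by linarith) (by linarith)
    have := hball hdist
    exact absurd this (not_le.2 hgt)
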